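/- In an implicative algebra compatible with joins, the second-order encoding of existential quantification is logically equivalent to the supremum: ⋀_{(b_i)}((⋁_{i∈I} b_i) → ⟆∃_{i∈I} b_i) ∈ Σ, where the outer meet ranges over all I-indexed families; moreover ⋀_{(b_i)}((⟆∃_{i∈I} b_i) → ⋁_{i∈I} b_i) ∈ Σ holds in any implicative algebra. -/
import Mathlib


universe u v

/-- An implicative algebra: a complete lattice with an implication antitone in the
first argument, monotone in the second, distributing over arbitrary meets in the
second argument, together with a separator `Sep` which is upward closed, closed
under modus ponens, and contains the combinators K and S. -/
structure ImplicativeAlgebra (A : Type u) [CompleteLattice A] where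
  imp : A → A → A
  imp_anti : ∀ ⦃a a' b : A⦄, a ≤ a' → imp a' b ≤ imp a b
  imp_mono : ∀ ⦃a b b' : A⦄, b ≤ b' → imp a b ≤ imp a b'
  imp_sInf : ∀ (a : A) (S : Set A), imp a (sInf S) = ⨅ b ∈ S, imp a b
  Sep : Set A
  sep_upward : ∀ ⦃a b : A⦄, a ∈ Sep → a ≤ b → b ∈ Sep
  sep_mp : ∀ ⦃a b : A⦄, imp a b ∈ Sep → a ∈ Sep → b ∈ Sep
  sep_K : (⨅ a : A, ⨅ b : A, imp a (imp b a)) ∈ Sep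
  sep_S : (⨅ a : A, ⨅ b : A, ⨅ c : A,
      imp (imp a (imp b c)) (imp (imp a b) (imp a c))) ∈ Sep

namespace ImplicativeAlgebra

variable {A : Type u} [CompleteLattice A] (𝔸 : ImplicativeAlgebra A)

/-- Application: `a · b := ⋀ {x | a ≤ b → x}`. -/
def app (a b : A) : A := sInf {x : A | a ≤ 𝔸.imp b x}

/-- Implicative conjunction `a × b`. -/
def itimes (a b : A) : A := ⨅ x : A, 𝔸.imp (𝔸.imp a (𝔸.imp b x)) x

/-- Implicative disjunction `a + b`. -/
def iplus (a b : A) : A := ⨅ x : A, 𝔸.imp (𝔸.imp a x) (𝔸.imp (𝔸.imp b x) x)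

/-- Second-order encoding of the existential quantifier. -/
def iexists {ι : Sort v} (f : ι → A) : A := ⨅ x : A, 𝔸.imp (⨅ i, 𝔸.imp (f i) x) x

/-- Encoding of k = λx.λy.x. -/
def kComb : A := ⨅ a : A, 𝔸.imp a (⨅ b : A, 𝔸.imp b a)

/-- Encoding of λx.λy.y. -/
def kbarComb : A := ⨅ a : A, 𝔸.imp a (⨅ b : A, 𝔸.imp b b)

/-- Encoding of the pairing combinator p = λx.λy.λz.zxy. -/
def pComb : A := ⨅ a : A, 𝔸.imp a (⨅ b : A, 𝔸.imp b (⨅ c : A, 𝔸.imp c (𝔸.app (𝔸.app c a) b)))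

/-- Encoding of the first projection p₁ = λu.u k. -/
def p1Comb : A := ⨅ u : A, 𝔸.imp u (𝔸.app u 𝔸.kComb)

/-- Encoding of the second projection p₂ = λv.v k̄. -/
def p2Comb : A := ⨅ u : A, 𝔸.imp u (𝔸.app u 𝔸.kbarComb)

/-- Encoding of the existential-introduction combinator e = λx.λz.zx. -/
def eComb : A := ⨅ a : A, 𝔸.imp a (⨅ c : A, 𝔸.imp c (𝔸.app c a))

end ImplicativeAlgebra

namespace ImplicativeAlgebra

variable {A : Type u} [CompleteLattice A] (𝔸 : ImplicativeAlgebra A)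

lemma imp_iInf' {ι : Sort*} (a : A) (g : ι → A) :
    𝔸.imp a (⨅ i, g i) = ⨅ i, 𝔸.imp a (g i) := by
  rw [iInf, 𝔸.imp_sInf, iInf_range]

lemma le_imp_app' (t a : A) : t ≤ 𝔸.imp a (𝔸.app t a) := by
  rw [app, 𝔸.imp_sInf]
  exact le_iInf₂ fun x hx => hx

lemma app_le' {t a c : A} (h : t ≤ 𝔸.imp a c) : 𝔸.app t a ≤ c := sInf_le h

lemma appT' {t a X Y : A} (ht : t ≤ 𝔸.imp X Y) (ha : a ≤ X) : 𝔸.app t a ≤ Y :=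
  𝔸.app_le' (ht.trans (𝔸.imp_anti ha))

lemma app_mem_sep' {t a : A} (ht : t ∈ 𝔸.Sep) (ha : a ∈ 𝔸.Sep) : 𝔸.app t a ∈ 𝔸.Sep :=
  𝔸.sep_mp (𝔸.sep_upward ht (𝔸.le_imp_app' t a)) ha

end ImplicativeAlgebra


/-- in an implicative algebra compatible with joins, the
second-order encoding of the existential quantifier is logically equivalent to
the supremum (the second implication holding in any implicative algebra). -/
theorem iexists_equiv_iSup {A : Type u} [CompleteLattice A]
    (𝔸 : ImplicativeAlgebra A) (I : Type v)
    (hcj : ∀ (ι : Type v) (f : ι → A) (b : A),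
      (⨅ i, 𝔸.imp (f i) b) = 𝔸.imp (⨆ i, f i) b) :
    ((⨅ f : I → A, 𝔸.imp (⨆ i, f i) (𝔸.iexists f)) ∈ 𝔸.Sep) ∧
      ((⨅ f : I → A, 𝔸.imp (𝔸.iexists f) (⨆ i, f i)) ∈ 𝔸.Sep) := by
  classical
  set imp := 𝔸.imp with himp
  set k : A := ⨅ a : A, ⨅ b : A, imp a (imp b a) with hkdef
  set s : A := ⨅ a : A, ⨅ b : A, ⨅ c : A,
      imp (imp a (imp b c)) (imp (imp a b) (imp a c)) with hsdef
  have hkmem : k ∈ 𝔸.Sep := 𝔸.sep_K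
  have hsmem : s ∈ 𝔸.Sep := 𝔸.sep_S
  have hk : ∀ a b : A, k ≤ imp a (imp b a) := fun a b =>
    le_trans (iInf_le _ a) (iInf_le _ b)
  have hs : ∀ a b c : A,
      s ≤ imp (imp a (imp b c)) (imp (imp a b) (imp a c)) := fun a b c =>
    le_trans (iInf_le _ a) (le_trans (iInf_le _ b) (iInf_le _ c))
  -- identity combinator  I = S K K
  set i0 : A := 𝔸.app (𝔸.app s k) k with hi0def
  have hi0mem : i0 ∈ 𝔸.Sep :=
    𝔸.app_mem_sep' (𝔸.app_mem_sep' hsmem hkmem) hkmem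
  have hi : ∀ a : A, i0 ≤ imp a a := by
    intro a
    have h1 : 𝔸.app s k ≤ imp (imp a (imp a a)) (imp a a) :=
      𝔸.appT' (hs a (imp a a) a) (hk a (imp a a))
    exact 𝔸.appT' h1 (hk a a)
  -- E = S (K (S I)) K  realizes  λa.λc. c a
  set E : A := 𝔸.app (𝔸.app s (𝔸.app k (𝔸.app s i0))) k with hEdef
  have hEmem : E ∈ 𝔸.Sep :=
    𝔸.app_mem_sep'
      (𝔸.app_mem_sep' hsmem (𝔸.app_mem_sep' hkmem (𝔸.app_mem_sep' hsmem hi0mem)))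
      hkmem
  have hE : ∀ a x : A, E ≤ imp a (imp (imp a x) x) := by
    intro a x
    have n1 : 𝔸.app s i0 ≤ imp (imp (imp a x) a) (imp (imp a x) x) :=
      𝔸.appT' (hs (imp a x) a x) (hi (imp a x))
    have n2 : 𝔸.app k (𝔸.app s i0) ≤
        imp a (imp (imp (imp a x) a) (imp (imp a x) x)) :=
      𝔸.appT' (hk (imp (imp (imp a x) a) (imp (imp a x) x)) a) n1
    have n3 : 𝔸.app s (𝔸.app k (𝔸.app s i0)) ≤
        imp (imp a (imp (imp a x) a)) (imp a (imp (imp a x) x)) :=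
      𝔸.appT' (hs a (imp (imp a x) a) (imp (imp a x) x)) n2
    exact 𝔸.appT' n3 (hk a (imp a x))
  -- T = S I (K I)  realizes  λu. u I
  set T : A := 𝔸.app (𝔸.app s i0) (𝔸.app k i0) with hTdef
  have hTmem : T ∈ 𝔸.Sep :=
    𝔸.app_mem_sep' (𝔸.app_mem_sep' hsmem hi0mem) (𝔸.app_mem_sep' hkmem hi0mem)
  have hT : ∀ f : I → A, T ≤ imp (𝔸.iexists f) (⨆ i, f i) := by
    intro f
    set u : A := 𝔸.iexists f with hudef
    set w : A := ⨆ i, f i with hwdef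
    set c : A := ⨅ j, imp (f j) w with hcdef
    have hu : u ≤ imp c w := iInf_le _ w
    have hic : i0 ≤ c := le_iInf fun j => (hi w).trans (𝔸.imp_anti (le_iSup f j))
    have p1 : 𝔸.app s i0 ≤ imp (imp u c) (imp u w) :=
      𝔸.appT' (hs u c w) ((hi u).trans (𝔸.imp_mono hu))
    have p2 : 𝔸.app k i0 ≤ imp u c := 𝔸.appT' (hk c u) hic
    exact 𝔸.appT' p1 p2
  constructor
  · refine 𝔸.sep_upward hEmem (le_iInf fun f => ?_)
    rw [← hcj I f (𝔸.iexists f)]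
    refine le_iInf fun i => ?_
    show E ≤ imp (f i) (𝔸.iexists f)
    rw [himp, ImplicativeAlgebra.iexists, 𝔸.imp_iInf']
    refine le_iInf fun x => ?_
    exact (hE (f i) x).trans (𝔸.imp_mono (𝔸.imp_anti (iInf_le _ i)))
  · exact 𝔸.sep_upward hTmem (le_iInf fun f => hT f)
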